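/- For every nonempty subset K of [n] and every signed permutation π in B_n, inv_K^B(π) = Σ over nonempty subsets K' of K of (-1)^{|K'|+1} inv_{lcm(K')}^B(π), where inv_m^B(π) is set to 0 whenever lcm(K') ≥ n+1. -/

import Mathlib

open Finset

/-- The value function of the signed permutation determined by `σ` and sign vector `ε`:
`bval n σ ε i` is `π(i)` for `i ∈ {-n,…,n}`, with `π(0) = 0` and `π(-i) = -π(i)`. -/
def bval (n : ℕ) (σ : Equiv.Perm (Fin n)) (ε : Fin n → Bool) : ℤ → ℤ := fun i =>
  if h : 1 ≤ i.natAbs ∧ i.natAbs ≤ n then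
    (Int.sign i) *
      (if ε ⟨i.natAbs - 1, by omega⟩ then -((((σ ⟨i.natAbs - 1, by omega⟩ : Fin n) : ℕ) : ℤ) + 1)
       else (((σ ⟨i.natAbs - 1, by omega⟩ : Fin n) : ℕ) : ℤ) + 1)
  else 0

/-- width-`k` type-B descent number: `#{0 ≤ i ≤ n-k : π(i) > π(i+k)}`, `π(0)=0`. -/
def desB (n k : ℕ) (π : ℤ → ℤ) : ℕ :=
  ((range (n - k + 1)).filter fun i : ℕ => π i > π ((i : ℤ) + k)).card

/-- width-`k` type-A descent number: `#{1 ≤ i ≤ n-k : π(i) > π(i+k)}`. -/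
def desA (n k : ℕ) (π : ℤ → ℤ) : ℕ :=
  ((Icc 1 (n - k)).filter fun i : ℕ => π i > π ((i : ℤ) + k)).card

/-- width-`k` negative descent number: `#{1 ≤ i ≤ n-k : π(-i) > π(i+k)}`. -/
def ndesB (n k : ℕ) (π : ℤ → ℤ) : ℕ :=
  ((Icc 1 (n - k)).filter fun i : ℕ => π (-(i : ℤ)) > π ((i : ℤ) + k)).card

/-- width-`k` inversion number: pairs `i < j` in `[n]` with `j - i` a positive multiple of `k`
and `π(i) > π(j)`. -/
def invAk (n k : ℕ) (π : ℤ → ℤ) : ℕ :=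
  (((Icc 1 n) ×ˢ (Icc 1 n)).filter fun p : ℕ × ℕ =>
    p.1 < p.2 ∧ k ∣ (p.2 - p.1) ∧ π p.1 > π p.2).card

/-- width-`k` negative-entry statistic: `#{1 ≤ i ≤ ⌊n/k⌋ : π(ik) < 0}`. -/
def negk (n k : ℕ) (π : ℤ → ℤ) : ℕ :=
  ((Icc 1 (n / k)).filter fun i : ℕ => π ((i : ℤ) * k) < 0).card

/-- width-`k` negative-sum-pair statistic. -/
def nspk (n k : ℕ) (π : ℤ → ℤ) : ℕ :=
  (((Icc 1 n) ×ˢ (Icc 1 n)).filter fun p : ℕ × ℕ =>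
    p.1 < p.2 ∧ k ∣ (p.2 - p.1) ∧ π p.1 + π p.2 < 0).card

/-- width-`k` type-B inversion number. -/
def invBk (n k : ℕ) (π : ℤ → ℤ) : ℕ := invAk n k π + negk n k π + nspk n k π

/-- The set `Inv_k^B(π)` of width-`k` type-B inversions of `π ∈ B_n`: pairs `(i, i+mk)`
with `0 ≤ i` and `π(i) > π(i+mk)`, or `(-i, i+mk)` with `π(-i) > π(i+mk)`, `m > 0`. -/
noncomputable def InvBSet (n k : ℕ) (π : ℤ → ℤ) : Finset (ℤ × ℤ) :=
  ((Finset.Icc (-(n : ℤ)) (n : ℤ)) ×ˢ (Finset.Icc (1 : ℤ) (n : ℤ))).filter fun p =>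
    π p.1 > π p.2 ∧
      ((0 ≤ p.1 ∧ p.1 < p.2 ∧ (k : ℤ) ∣ (p.2 - p.1)) ∨
       (p.1 < 0 ∧ -p.1 < p.2 ∧ (k : ℤ) ∣ (p.2 + p.1)))

lemma InvBSet_empty (n m : ℕ) (π : ℤ → ℤ) (h : n + 1 ≤ m) : InvBSet n m π = ∅ := by
  ext p
  simp only [InvBSet, mem_filter, mem_product, mem_Icc, Finset.notMem_empty, iff_false]
  rintro ⟨⟨⟨h1, h2⟩, h3, h4⟩, h5, (⟨a1, a2, a3⟩ | ⟨b1, b2, b3⟩)⟩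
  · have := Int.le_of_dvd (by omega) a3; omega
  · have := Int.le_of_dvd (by omega) b3; omega

lemma lcm_cast_dvd (K' : Finset ℕ) (d : ℤ) :
    ((K'.lcm id : ℕ) : ℤ) ∣ d ↔ ∀ k ∈ K', (k : ℤ) ∣ d := by
  rw [Int.natCast_dvd, Finset.lcm_dvd_iff]
  simp [Int.natCast_dvd]

lemma mem_InvBSet_lcm (n : ℕ) (K' : Finset ℕ) (hK' : K'.Nonempty) (π : ℤ → ℤ)
    (p : ℤ × ℤ) : p ∈ InvBSet n (K'.lcm id) π ↔ ∀ k ∈ K', p ∈ InvBSet n k π := by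
  obtain ⟨k₀, hk₀⟩ := hK'
  simp only [InvBSet, mem_filter, mem_product, mem_Icc]
  constructor
  · rintro ⟨hp, h5, (⟨a1, a2, a3⟩ | ⟨b1, b2, b3⟩)⟩ k hk
    · exact ⟨hp, h5, Or.inl ⟨a1, a2, ((lcm_cast_dvd K' _).1 a3) k hk⟩⟩
    · exact ⟨hp, h5, Or.inr ⟨b1, b2, ((lcm_cast_dvd K' _).1 b3) k hk⟩⟩
  · intro h
    obtain ⟨hp, h5, hor⟩ := h k₀ hk₀
    refine ⟨hp, h5, ?_⟩
    rcases hor with ⟨a1, a2, -⟩ | ⟨b1, b2, -⟩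
    · refine Or.inl ⟨a1, a2, (lcm_cast_dvd K' _).2 fun k hk => ?_⟩
      rcases (h k hk).2.2 with ⟨-, -, h3⟩ | ⟨b1, -, -⟩
      · exact h3
      · omega
    · refine Or.inr ⟨b1, b2, (lcm_cast_dvd K' _).2 fun k hk => ?_⟩
      rcases (h k hk).2.2 with ⟨a1, -, -⟩ | ⟨-, -, h3⟩
      · omega
      · exact h3

/-- Proposition 5: inclusion–exclusion for `inv_K^B`. -/
theorem stmt1 (n : ℕ) (K : Finset ℕ) (hK : K.Nonempty) (hKn : K ⊆ Finset.Icc 1 n)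
    (σ : Equiv.Perm (Fin n)) (ε : Fin n → Bool) :
    ((K.biUnion fun k => InvBSet n k (bval n σ ε)).card : ℤ) =
      ∑ K' ∈ K.powerset.filter Finset.Nonempty,
        (-1 : ℤ) ^ (K'.card + 1) *
          (if n + 1 ≤ K'.lcm id then 0
           else ((InvBSet n (K'.lcm id) (bval n σ ε)).card : ℤ)) := by
  set π := bval n σ ε with hπ
  rw [Finset.inclusion_exclusion_card_biUnion K (fun k => InvBSet n k π),
    Finset.univ_eq_attach,
    ← Finset.sum_attach (K.powerset.filter Finset.Nonempty)
      (fun K' => (-1:ℤ)^(K'.card+1) *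
        (if n+1 ≤ K'.lcm id then 0 else ((InvBSet n (K'.lcm id) π).card:ℤ)))]
  refine Finset.sum_congr rfl fun t _ => ?_
  congr 1
  have hne : t.1.Nonempty := (mem_filter.1 t.2).2
  have hinf : t.1.inf' (mem_filter.1 t.2).2 (fun k => InvBSet n k π)
      = InvBSet n (t.1.lcm id) π := by
    ext p
    rw [Finset.mem_inf']
    exact (mem_InvBSet_lcm n t.1 hne π p).symm
  rw [hinf]
  split_ifs with h
  · rw [InvBSet_empty n _ π h]; simp
  · rfl
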